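/- Fix a nonzero real number λ and an integer r ≥ 1. In ℝ[[t]]: −(1−t)^{−r} · log_λ(1−t) = Σ_{n=1}^{∞} H^{(r)}_{n,λ} t^n, i.e., for every n ≥ 1 the coefficient of t^n in −log_λ(1−t)/(1−t)^r is the degenerate hyperharmonic number H^{(r)}_{n,λ}. -/

import Mathlib

open Finset PowerSeries

noncomputable section

/-- The generalized binomial coefficient `C(x,k) = x(x-1)⋯(x-k+1)/k!`. -/
def gbinom (x : ℝ) (k : ℕ) : ℝ := (∏ i ∈ Finset.range k, (x - i)) / k.factorial

/-- The degenerate harmonic numbers `H_{n,λ} = ∑_{k=1}^n (-1)^{k-1} (1/λ) C(λ,k)`,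
with `H_{0,λ} = 0`. -/
def dH (lam : ℝ) (n : ℕ) : ℝ :=
  ∑ k ∈ Finset.Icc 1 n, (-1 : ℝ) ^ (k - 1) * (1 / lam) * gbinom lam k

/-- The degenerate hyperharmonic numbers: `H^{(1)}_{n,λ} = H_{n,λ}`, `H^{(r)}_{0,λ} = 0`, and
`H^{(r)}_{n,λ} = ∑_{k=1}^n H^{(r-1)}_{k,λ}` for `r ≥ 2`, `n ≥ 1`.
(The value at `r = 0` is junk.) -/
def dHyper (lam : ℝ) : ℕ → ℕ → ℝ
  | 0, _ => 0
  | 1, n => dH lam n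
  | (r + 2), n => ∑ k ∈ Finset.Icc 1 n, dHyper lam (r + 1) k

/-- The degenerate logarithm evaluated at `1 - t`: the formal power series
`log_λ(1-t) = ∑_{n≥1} (1/λ) C(λ,n) (-t)^n` in `ℝ[[t]]`. -/
def dlogNeg (lam : ℝ) : PowerSeries ℝ :=
  PowerSeries.mk fun n => if n = 0 then 0 else (-1 : ℝ) ^ n * (1 / lam) * gbinom lam n

lemma inv_one_sub_X : ((1 - X : PowerSeries ℝ)⁻¹) = PowerSeries.mk fun _ => (1:ℝ) := by
  symm
  rw [PowerSeries.eq_inv_iff_mul_eq_one]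
  · ext n
    rw [PowerSeries.coeff_one, PowerSeries.coeff_mul,
      Finset.Nat.sum_antidiagonal_eq_sum_range_succ_mk]
    simp only [PowerSeries.coeff_mk, mul_one, map_sub, PowerSeries.coeff_one, PowerSeries.coeff_X,
      Finset.sum_sub_distrib, Finset.sum_ite_eq', Finset.mem_range]
    cases n with
    | zero => simp
    | succ m =>
      have h1 : filter (fun x => m + 1 - x = 0) (range (m + 2)) = {m+1} := by
        ext x; simp; omega
      have h2 : filter (fun x => m + 1 - x = 1) (range (m + 2)) = {m} := by
        ext x; simp; omega
      simp [h1, h2]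
  · simp

lemma coeff_inv_mul (f : PowerSeries ℝ) (n : ℕ) :
    PowerSeries.coeff n ((1 - X)⁻¹ * f) = ∑ k ∈ Finset.range (n+1), PowerSeries.coeff k f := by
  rw [inv_one_sub_X, PowerSeries.coeff_mul, Finset.Nat.sum_antidiagonal_eq_sum_range_succ_mk]
  simp only [PowerSeries.coeff_mk, one_mul]
  have := Finset.sum_range_reflect (fun k => PowerSeries.coeff k f) (n+1)
  simpa using this

lemma sum_range_eq_Icc (g : ℕ → ℝ) (hg : g 0 = 0) (n : ℕ) :
    ∑ k ∈ Finset.range (n+1), g k = ∑ k ∈ Finset.Icc 1 n, g k := by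
  induction n with
  | zero => simp [hg]
  | succ m ih => rw [Finset.sum_range_succ, ih, ← Finset.sum_Icc_succ_top (by omega)]

lemma dHyper_zero (lam : ℝ) (r : ℕ) : dHyper lam r 0 = 0 := by
  match r with
  | 0 => rfl
  | 1 => simp [dHyper, dH]
  | (s+2) => simp [dHyper]

/-- for `r ≥ 1`, in `ℝ[[t]]`,
`-(1-t)^{-r} log_λ(1-t) = ∑_{n=1}^∞ H^{(r)}_{n,λ} t^n`
(the coefficient of `t^0` on both sides being `0`, as `H^{(r)}_{0,λ} = 0`). -/
theorem statement_17 (lam : ℝ) (hlam : lam ≠ 0) (r : ℕ) (hr : 1 ≤ r) :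
    -(((1 - PowerSeries.X : PowerSeries ℝ)⁻¹) ^ r * dlogNeg lam) =
      PowerSeries.mk fun n => dHyper lam r n := by
  induction r, hr using Nat.le_induction with
  | base =>
    ext n
    simp only [map_neg, pow_one, coeff_inv_mul, PowerSeries.coeff_mk]
    rw [sum_range_eq_Icc _ (by simp [dlogNeg]) n, ← Finset.sum_neg_distrib]
    show _ = dH lam n
    rw [dH]
    refine Finset.sum_congr rfl fun k hk => ?_
    simp only [Finset.mem_Icc] at hk
    obtain ⟨m, rfl⟩ := Nat.exists_eq_add_of_le hk.1
    simp [dlogNeg, pow_succ]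
    ring
  | succ r hr ih =>
    have h : (((1 - X : PowerSeries ℝ)⁻¹) ^ (r+1) * dlogNeg lam)
        = (1 - X)⁻¹ * (((1 - X)⁻¹) ^ r * dlogNeg lam) := by ring
    rw [h, ← mul_neg, ih]
    ext n
    rw [coeff_inv_mul, PowerSeries.coeff_mk]
    simp only [PowerSeries.coeff_mk]
    rw [sum_range_eq_Icc _ (dHyper_zero lam r) n]
    obtain ⟨s, rfl⟩ := Nat.exists_eq_add_of_le' hr
    rfl
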